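/- Let G be a finite undirected graph with normalized Laplacian second-smallest eigenvalue λ₂, and let S be a subset of vertices. Then the number of boundary edges satisfies |∂(S)| ≥ λ₂ · vol(S) · (1 − vol(S)/vol(G)), where ∂(S) is the set of edges with exactly one endpoint in S and vol(S) is the sum of degrees of vertices in S. -/

import Mathlib

open Finset

/-- Normalized Laplacian `L = I − D^{-1/2} A D^{-1/2}` of a finite simple graph,
with the convention that the `D^{-1/2}` entry of an isolated vertex is `0`. -/
noncomputable def normLap {V : Type*} [Fintype V] [DecidableEq V]
    (G : SimpleGraph V) [DecidableRel G.Adj] : Matrix V V ℝ :=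
  let Dh : Matrix V V ℝ :=
    Matrix.diagonal fun v => if G.degree v = 0 then 0 else (Real.sqrt (G.degree v))⁻¹
  1 - Dh * G.adjMatrix ℝ * Dh

/-- The second smallest eigenvalue (with multiplicity) of a Hermitian real matrix. -/
noncomputable def secondEig {V : Type*} [Fintype V] [DecidableEq V]
    (M : Matrix V V ℝ) (hM : M.IsHermitian) : ℝ :=
  ((Finset.univ.val.map hM.eigenvalues).sort (· ≤ ·)).getD 1 0

section RayleighAux

open Matrix

/-- Rayleigh-quotient bound: if `w` is a nonzero kernel vector of a symmetric matrix `M`,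
`x` is orthogonal to `w`, and the second smallest eigenvalue `lam2` is positive, then
`lam2 * ⟨x,x⟩ ≤ ⟨x, Mx⟩`. -/
private lemma rayleigh_second {n : Type*} [Fintype n] [DecidableEq n]
    (M : Matrix n n ℝ) (hM : M.IsHermitian)
    (lam2 : ℝ) (hlam : lam2 = secondEig M hM) (hpos : 0 < lam2)
    (w x : n → ℝ) (hker : M *ᵥ w = 0) (hw0 : w ≠ 0) (horth : w ⬝ᵥ x = 0) :
    lam2 * (x ⬝ᵥ x) ≤ x ⬝ᵥ (M *ᵥ x) := by
  classical
  set B := hM.eigenvectorBasis with hB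
  set μ := hM.eigenvalues with hmu
  have hMT : Mᵀ = M := by
    have h := hM.eq
    rwa [Matrix.conjTranspose_eq_transpose_of_trivial] at h
  have hsym : ∀ a b : n → ℝ, a ⬝ᵥ (M *ᵥ b) = (M *ᵥ a) ⬝ᵥ b := by
    intro a b
    rw [Matrix.dotProduct_mulVec, ← Matrix.mulVec_transpose, hMT]
  have hinner : ∀ a b : n → ℝ,
      (inner ℝ ((WithLp.equiv 2 (n → ℝ)).symm a) ((WithLp.equiv 2 (n → ℝ)).symm b) : ℝ) = a ⬝ᵥ b := by
    intro a b; rw [PiLp.inner_apply]; simp [dotProduct, RCLike.inner_apply, mul_comm]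
  have hBdot : ∀ (i : n) (y : n → ℝ), (B i : n → ℝ) ⬝ᵥ (M *ᵥ y) = μ i * ((B i : n → ℝ) ⬝ᵥ y) := by
    intro i y
    rw [hsym, show M *ᵥ (B i : n → ℝ) = μ i • (B i : n → ℝ) from hM.mulVec_eigenvectorBasis i,
      smul_dotProduct, smul_eq_mul]
  have hpars : ∀ a b : n → ℝ,
      (∑ i, ((B i : n → ℝ) ⬝ᵥ a) * ((B i : n → ℝ) ⬝ᵥ b)) = a ⬝ᵥ b := by
    intro a b
    have key := B.sum_inner_mul_inner ((WithLp.equiv 2 (n → ℝ)).symm a)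
      ((WithLp.equiv 2 (n → ℝ)).symm b)
    rw [hinner] at key
    rw [← key]
    refine Finset.sum_congr rfl fun i _ => ?_
    have h1 : (inner ℝ ((WithLp.equiv 2 (n → ℝ)).symm a) (B i) : ℝ) = (B i : n → ℝ) ⬝ᵥ a := by
      rw [real_inner_comm]; exact hinner _ _
    have h3 : (inner ℝ (B i) ((WithLp.equiv 2 (n → ℝ)).symm b) : ℝ) = (B i : n → ℝ) ⬝ᵥ b :=
      hinner _ _
    rw [h1, h3]
  have hmd : ∀ i, μ i * ((B i : n → ℝ) ⬝ᵥ w) = 0 := by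
    intro i
    have h := hBdot i w
    rw [hker] at h
    simpa using h.symm
  have hcard : (Finset.univ.filter fun i => μ i < lam2).card ≤ 1 := by
    have hsorted : ((Finset.univ.val.map μ).sort (· ≤ ·)).Pairwise (· ≤ ·) := Multiset.pairwise_sort _ _
    have hsorteq : (((Finset.univ.val.map μ).sort (· ≤ ·) : List ℝ) : Multiset ℝ)
        = Finset.univ.val.map μ := Multiset.sort_eq _ _
    have hlam' : lam2 = ((Finset.univ.val.map μ).sort (· ≤ ·)).getD 1 0 := hlam
    obtain ⟨a, b, t, hl⟩ : ∃ a b t, (Finset.univ.val.map μ).sort (· ≤ ·) = a :: b :: t := by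
      rcases hll : (Finset.univ.val.map μ).sort (· ≤ ·) with _ | ⟨a, _ | ⟨b, t⟩⟩
      · rw [hll] at hlam'; simp [List.getD] at hlam'; linarith
      · rw [hll] at hlam'; simp [List.getD] at hlam'; linarith
      · exact ⟨_, _, _, rfl⟩
    rw [hl] at hsorted hsorteq hlam'
    have hlam2b : lam2 = b := by simpa [List.getD] using hlam'
    have hcc : (Finset.univ.filter fun i => μ i < lam2).card
        = Multiset.card (Multiset.filter (fun r => r < lam2) (Finset.univ.val.map μ)) := by
      rw [Multiset.filter_map, Multiset.card_map, Finset.card, Finset.filter_val]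
      rfl
    rw [hcc, ← hsorteq, Multiset.filter_coe, Multiset.coe_card]
    have hbt : List.filter (fun e => decide (e < lam2)) (b :: t) = [] := by
      rw [List.filter_eq_nil_iff]
      intro e he
      simp only [decide_eq_true_eq, not_lt]
      rw [hlam2b]
      rcases List.pairwise_cons.mp hsorted with ⟨_, hs2⟩
      rcases List.mem_cons.mp he with rfl | het
      · exact le_refl _
      · exact (List.pairwise_cons.mp hs2).1 e het
    rw [List.filter_cons, hbt]
    split <;> simp
  obtain ⟨j, hdj⟩ : ∃ j, (B j : n → ℝ) ⬝ᵥ w ≠ 0 := by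
    by_contra hall
    push_neg at hall
    apply hw0
    have hzero : ((WithLp.equiv 2 (n → ℝ)).symm w) = 0 := by
      rw [← B.sum_repr' ((WithLp.equiv 2 (n → ℝ)).symm w)]
      refine Finset.sum_eq_zero fun i _ => ?_
      have h2 : (inner ℝ (B i) ((WithLp.equiv 2 (n → ℝ)).symm w) : ℝ) = (B i : n → ℝ) ⬝ᵥ w :=
        hinner _ _
      rw [h2, hall i, zero_smul]
    have := congrArg (WithLp.equiv 2 (n → ℝ)) hzero
    simpa using this
  have hmuj : μ j = 0 := by
    rcases mul_eq_zero.mp (hmd j) with h | h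
    · exact h
    · exact absurd h hdj
  have hge : ∀ i, i ≠ j → lam2 ≤ μ i := by
    intro i hij
    by_contra h
    push_neg at h
    have hi : i ∈ Finset.univ.filter fun i => μ i < lam2 := by simp [h]
    have hj : j ∈ Finset.univ.filter fun i => μ i < lam2 := by simp [hmuj, hpos]
    exact hij (Finset.card_le_one.mp hcard i hi j hj)
  have hdz : ∀ i, i ≠ j → (B i : n → ℝ) ⬝ᵥ w = 0 := by
    intro i hij
    have hne : μ i ≠ 0 := ne_of_gt (lt_of_lt_of_le hpos (hge i hij))
    rcases mul_eq_zero.mp (hmd i) with h | h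
    · exact absurd h hne
    · exact h
  have hcj : (B j : n → ℝ) ⬝ᵥ x = 0 := by
    have hwx : (∑ i, ((B i : n → ℝ) ⬝ᵥ w) * ((B i : n → ℝ) ⬝ᵥ x)) = 0 := by
      rw [hpars w x, horth]
    have hone : (∑ i, ((B i : n → ℝ) ⬝ᵥ w) * ((B i : n → ℝ) ⬝ᵥ x))
        = ((B j : n → ℝ) ⬝ᵥ w) * ((B j : n → ℝ) ⬝ᵥ x) :=
      Finset.sum_eq_single j (fun i _ hij => by rw [hdz i hij, zero_mul])
        (fun h => absurd (Finset.mem_univ j) h)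
    rw [hone] at hwx
    rcases mul_eq_zero.mp hwx with h | h
    · exact absurd h hdj
    · exact h
  have hxMx : x ⬝ᵥ (M *ᵥ x) = ∑ i, μ i * (((B i : n → ℝ) ⬝ᵥ x) * ((B i : n → ℝ) ⬝ᵥ x)) := by
    rw [← hpars x (M *ᵥ x)]
    refine Finset.sum_congr rfl fun i _ => ?_
    rw [hBdot i x]; ring
  rw [hxMx, ← hpars x x, Finset.mul_sum]
  refine Finset.sum_le_sum fun i _ => ?_
  by_cases hij : i = j
  · subst hij
    rw [hcj]
    simp
  · exact mul_le_mul_of_nonneg_right (hge i hij) (mul_self_nonneg _)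

end RayleighAux

section GraphAux

open Matrix

variable {V : Type*} [Fintype V] [DecidableEq V] (G : SimpleGraph V) [DecidableRel G.Adj]

/-- The diagonal entries `D^{-1/2}` used in the normalized Laplacian. -/
private noncomputable def nlf (G : SimpleGraph V) [DecidableRel G.Adj] : V → ℝ :=
  fun v => if G.degree v = 0 then 0 else (Real.sqrt (G.degree v))⁻¹

private lemma normLap_mulVec (z : V → ℝ) :
    normLap G *ᵥ z = fun v => z v - nlf G v * ∑ u ∈ G.neighborFinset v, nlf G u * z u := by
  funext v
  show ((1 - Matrix.diagonal (nlf G) * G.adjMatrix ℝ * Matrix.diagonal (nlf G)) *ᵥ z) v = _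
  rw [Matrix.sub_mulVec]
  simp only [Pi.sub_apply, Matrix.one_mulVec]
  congr 1
  rw [← Matrix.mulVec_mulVec, ← Matrix.mulVec_mulVec, Matrix.mulVec_diagonal,
    SimpleGraph.adjMatrix_mulVec_apply]
  congr 1
  refine Finset.sum_congr rfl fun u _ => ?_
  rw [Matrix.mulVec_diagonal]

omit [DecidableEq V] in
private lemma nlf_mul_sqrt {u : V} (hu : G.degree u ≠ 0) :
    nlf G u * Real.sqrt (G.degree u) = 1 := by
  rw [nlf, if_neg hu]
  refine inv_mul_cancel₀ ?_
  rw [Real.sqrt_ne_zero']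
  exact_mod_cast Nat.pos_of_ne_zero hu

omit [DecidableEq V] in
private lemma degree_ne_zero_of_mem_neighborFinset {v u : V} (hu : u ∈ G.neighborFinset v) :
    G.degree u ≠ 0 := by
  rw [SimpleGraph.mem_neighborFinset] at hu
  have : 0 < G.degree u := by
    rw [G.degree_pos_iff_exists_adj]
    exact ⟨v, hu.symm⟩
  omega

/-- The kernel vector `D^{1/2} 1` of the normalized Laplacian. -/
private lemma normLap_kernel :
    normLap G *ᵥ (fun v => Real.sqrt (G.degree v)) = 0 := by
  rw [normLap_mulVec]
  funext v
  have hsum : ∑ u ∈ G.neighborFinset v, nlf G u * Real.sqrt (G.degree u) = (G.degree v : ℝ) := by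
    rw [show (G.degree v : ℝ) = ((G.neighborFinset v).card : ℝ) by
      rw [SimpleGraph.card_neighborFinset_eq_degree]]
    rw [Finset.card_eq_sum_ones]
    push_cast
    refine Finset.sum_congr rfl fun u hu => ?_
    exact nlf_mul_sqrt G (degree_ne_zero_of_mem_neighborFinset G hu)
  show Real.sqrt (G.degree v) - nlf G v * ∑ u ∈ G.neighborFinset v, nlf G u * Real.sqrt (G.degree u)
      = 0
  rw [hsum]
  by_cases hv : G.degree v = 0
  · simp [nlf, hv]
  · have hsne : Real.sqrt (G.degree v) ≠ 0 := by
      rw [Real.sqrt_ne_zero']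
      exact_mod_cast Nat.pos_of_ne_zero hv
    rw [nlf, if_neg hv]
    field_simp
    rw [Real.sq_sqrt (by positivity)]; ring

/-- Value of the normalized-Laplacian quadratic form on the shifted indicator test vector:
it equals the number of boundary (ordered) pairs. -/
private lemma quad_form (S : Finset V) (σ : ℝ) (y x : V → ℝ)
    (hy : ∀ v, y v = (if v ∈ S then (1:ℝ) else 0) - σ)
    (hx : ∀ v, x v = Real.sqrt (G.degree v) * y v) :
    x ⬝ᵥ (normLap G *ᵥ x) =
      ((Finset.univ.filter fun p : V × V => G.Adj p.1 p.2 ∧ p.1 ∈ S ∧ p.2 ∉ S).card : ℝ) := by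
  classical
  have hfx : ∀ v u, u ∈ G.neighborFinset v → nlf G u * x u = y u := by
    intro v u hu
    have hdu := degree_ne_zero_of_mem_neighborFinset G hu
    rw [hx, ← mul_assoc, nlf_mul_sqrt G hdu, one_mul]
  have step1 : x ⬝ᵥ (normLap G *ᵥ x)
      = ∑ v, (x v * x v - y v * ∑ u ∈ G.neighborFinset v, y u) := by
    rw [normLap_mulVec]
    refine Finset.sum_congr rfl fun v _ => ?_
    dsimp only
    have hs : ∑ u ∈ G.neighborFinset v, nlf G u * x u = ∑ u ∈ G.neighborFinset v, y u :=
      Finset.sum_congr rfl fun u hu => hfx v u hu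
    rw [hs, mul_sub]
    congr 1
    by_cases hv : G.degree v = 0
    · have hemp : G.neighborFinset v = ∅ := by
        apply Finset.card_eq_zero.mp
        rw [SimpleGraph.card_neighborFinset_eq_degree]
        exact hv
      rw [hemp]
      simp [nlf, hv]
    · have hsne : Real.sqrt (G.degree v) ≠ 0 := by
        rw [Real.sqrt_ne_zero']
        exact_mod_cast Nat.pos_of_ne_zero hv
      rw [hx, nlf, if_neg hv]
      field_simp
  have step2 : x ⬝ᵥ (normLap G *ᵥ x)
      = ∑ v, ∑ u, if G.Adj v u then y v * (y v - y u) else 0 := by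
    rw [step1]
    refine Finset.sum_congr rfl fun v _ => ?_
    have hxx : x v * x v = (G.degree v : ℝ) * (y v * y v) := by
      rw [hx]
      have h := Real.mul_self_sqrt (x := ((G.degree v : ℝ))) (by positivity)
      nlinarith [h]
    have hdeg := SimpleGraph.degree_eq_sum_if_adj (G := G) (R := ℝ) v
    rw [hxx, hdeg, Finset.sum_mul,
      SimpleGraph.neighborFinset_eq_filter, Finset.sum_filter, Finset.mul_sum,
      ← Finset.sum_sub_distrib]
    refine Finset.sum_congr rfl fun u _ => ?_
    by_cases h : G.Adj v u
    · simp only [h, if_true]; ring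
    · simp [h]
  set T := ∑ v, ∑ u, if G.Adj v u then y v * (y v - y u) else 0 with hT
  have hswap : T = ∑ v, ∑ u, if G.Adj v u then y u * (y u - y v) else 0 := by
    rw [hT, Finset.sum_comm]
    refine Finset.sum_congr rfl fun v _ => Finset.sum_congr rfl fun u _ => ?_
    rw [if_congr (G.adj_comm u v) rfl rfl]
  have hcard : ((Finset.univ.filter fun p : V × V => G.Adj p.1 p.2 ∧ p.1 ∈ S ∧ p.2 ∉ S).card : ℝ)
      = ∑ v, ∑ u, if G.Adj v u ∧ v ∈ S ∧ u ∉ S then (1:ℝ) else 0 := by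
    rw [Finset.card_filter]
    push_cast
    rw [Fintype.sum_prod_type]
  have hrev : (∑ v, ∑ u, if G.Adj v u ∧ u ∈ S ∧ v ∉ S then (1:ℝ) else 0)
      = ∑ v, ∑ u, if G.Adj v u ∧ v ∈ S ∧ u ∉ S then (1:ℝ) else 0 := by
    rw [Finset.sum_comm]
    refine Finset.sum_congr rfl fun v _ => Finset.sum_congr rfl fun u _ => ?_
    rw [if_congr (by rw [G.adj_comm u v]) rfl rfl]
  have hdouble : T + T = (∑ v, ∑ u, if G.Adj v u ∧ v ∈ S ∧ u ∉ S then (1:ℝ) else 0)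
      + ∑ v, ∑ u, if G.Adj v u ∧ u ∈ S ∧ v ∉ S then (1:ℝ) else 0 := by
    nth_rewrite 2 [hswap]
    rw [← Finset.sum_add_distrib, ← Finset.sum_add_distrib]
    refine Finset.sum_congr rfl fun v _ => ?_
    rw [← Finset.sum_add_distrib, ← Finset.sum_add_distrib]
    refine Finset.sum_congr rfl fun u _ => ?_
    by_cases hadj : G.Adj v u
    · by_cases hvS : v ∈ S <;> by_cases huS : u ∈ S <;>
        (simp [hadj, hvS, huS, hy]; try ring)
    · simp [hadj]
  rw [step2, hcard]
  rw [hrev] at hdouble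
  linarith

end GraphAux

theorem stmt_0 {V : Type*} [Fintype V] [DecidableEq V]
    (G : SimpleGraph V) [DecidableRel G.Adj]
    (hL : (normLap G).IsHermitian) (lam2 : ℝ) (hlam : lam2 = secondEig (normLap G) hL)
    (S : Finset V) :
    ((Finset.univ.filter fun p : V × V => G.Adj p.1 p.2 ∧ p.1 ∈ S ∧ p.2 ∉ S).card : ℝ) ≥
      lam2 * (∑ v ∈ S, (G.degree v : ℝ)) *
        (1 - (∑ v ∈ S, (G.degree v : ℝ)) / (∑ v : V, (G.degree v : ℝ))) := by
  classical
  set dS := ∑ v ∈ S, (G.degree v : ℝ) with hdS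
  set dG := ∑ v : V, (G.degree v : ℝ) with hdG
  have hLHS0 : (0:ℝ) ≤
      ((Finset.univ.filter fun p : V × V => G.Adj p.1 p.2 ∧ p.1 ∈ S ∧ p.2 ∉ S).card : ℝ) := by
    positivity
  have hdS0 : 0 ≤ dS := Finset.sum_nonneg fun v _ => by positivity
  have hdSG : dS ≤ dG :=
    Finset.sum_le_sum_of_subset_of_nonneg (Finset.subset_univ S) (fun v _ _ => by positivity)
  rw [ge_iff_le]
  by_cases h1 : dS = 0
  · rw [h1]
    simpa using hLHS0
  by_cases h3 : lam2 ≤ 0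
  · have hdSpos : 0 < dS := lt_of_le_of_ne hdS0 (Ne.symm h1)
    have hdGpos : 0 < dG := lt_of_lt_of_le hdSpos hdSG
    have hσ : dS / dG ≤ 1 := div_le_one_of_le₀ hdSG (le_of_lt hdGpos)
    have hfac : 0 ≤ dS * (1 - dS / dG) := mul_nonneg hdS0 (by linarith)
    nlinarith [hfac]
  push_neg at h3
  by_cases h2 : dS = dG
  · have hdSpos : 0 < dS := lt_of_le_of_ne hdS0 (Ne.symm h1)
    rw [← h2, div_self (ne_of_gt hdSpos)]
    simpa using hLHS0
  have hdSpos : 0 < dS := lt_of_le_of_ne hdS0 (Ne.symm h1)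
  have hdGpos : 0 < dG := lt_of_lt_of_le hdSpos hdSG
  set σ := dS / dG with hσdef
  set y : V → ℝ := fun v => (if v ∈ S then (1:ℝ) else 0) - σ with hydef
  set x : V → ℝ := fun v => Real.sqrt (G.degree v) * y v with hxdef
  set w : V → ℝ := fun v => Real.sqrt (G.degree v) with hwdef
  have hker : (normLap G).mulVec w = 0 := normLap_kernel G
  have hw0 : w ≠ 0 := by
    obtain ⟨v, hv⟩ : ∃ v, (0:ℝ) < (G.degree v : ℝ) := by
      by_contra hall
      push_neg at hall
      have : dG ≤ 0 := Finset.sum_nonpos fun v _ => hall v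
      linarith
    intro h
    have h0 := congrFun h v
    have : Real.sqrt (G.degree v) = 0 := h0
    rw [Real.sqrt_eq_zero (by positivity)] at this
    linarith
  have horth : dotProduct w x = 0 := by
    have hdot : dotProduct w x = ∑ v, (G.degree v : ℝ) * y v := by
      refine Finset.sum_congr rfl fun v _ => ?_
      show Real.sqrt (G.degree v) * (Real.sqrt (G.degree v) * y v) = _
      rw [← mul_assoc, Real.mul_self_sqrt (by positivity)]
    have hS : ∑ v, (if v ∈ S then (G.degree v : ℝ) else 0) = dS := by
      rw [Finset.sum_ite_mem, Finset.univ_inter, hdS]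
    have hsplit : ∑ v, (G.degree v : ℝ) * y v = dS - σ * dG := by
      have : ∀ v, (G.degree v : ℝ) * y v
          = (if v ∈ S then (G.degree v : ℝ) else 0) - σ * (G.degree v : ℝ) := by
        intro v
        by_cases hv : v ∈ S <;> simp [hydef, hv] <;> ring
      rw [Finset.sum_congr rfl fun v _ => this v, Finset.sum_sub_distrib, hS, ← Finset.mul_sum,
        ← hdG]
    rw [hdot, hsplit, hσdef]
    field_simp
    ring
  have hquad := quad_form G S σ y x (fun v => rfl) (fun v => rfl)
  have hxx : dotProduct x x = dS * (1 - σ) := by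
    have h1' : dotProduct x x = ∑ v, (G.degree v : ℝ) * (y v * y v) := by
      refine Finset.sum_congr rfl fun v _ => ?_
      show (Real.sqrt (G.degree v) * y v) * (Real.sqrt (G.degree v) * y v) = _
      have h := Real.mul_self_sqrt (x := ((G.degree v : ℝ))) (by positivity)
      linear_combination (y v * y v) * h
    have h2' : ∀ v, (G.degree v : ℝ) * (y v * y v)
        = (1 - 2*σ) * (if v ∈ S then (G.degree v : ℝ) else 0) + σ^2 * (G.degree v : ℝ) := by
      intro v
      by_cases hv : v ∈ S <;> simp [hydef, hv] <;> ring
    have hS : ∑ v, (if v ∈ S then (G.degree v : ℝ) else 0) = dS := by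
      rw [Finset.sum_ite_mem, Finset.univ_inter, hdS]
    rw [h1', Finset.sum_congr rfl fun v _ => h2' v, Finset.sum_add_distrib, ← Finset.mul_sum,
      ← Finset.mul_sum, hS, ← hdG, hσdef]
    field_simp
    ring
  have main := rayleigh_second (normLap G) hL lam2 hlam h3 w x hker hw0 horth
  rw [hquad, hxx] at main
  calc lam2 * dS * (1 - dS / dG) = lam2 * (dS * (1 - σ)) := by rw [hσdef]; ring
    _ ≤ _ := main
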